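/- Let G₂ = ⟨a,b,c | a⁴ = b⁴ = c² = 1, [a,b] = 1, [c,a] = a², [c,b] = b²⟩ ≅ ℤ₂ ⋉ (ℤ₄)². Every normal abelian subgroup of G₂ of order 4 is contained in ⟨a,b⟩, and the only normal subgroup of G₂ isomorphic to ℤ₂ × ℤ₂ is the central subgroup ⟨a², b²⟩. -/

import Mathlib

private lemma pow_bridge {G : Type*} [Group G] (a : G) (m : ℕ) [NeZero m]
    (ha : a ^ m = 1) (n : ℤ) : a ^ n = a ^ ((n : ZMod m)).val := by
  have h0 : (((((n : ZMod m).val : ℤ) - n) : ℤ) : ZMod m) = 0 := by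
    push_cast [ZMod.natCast_val, ZMod.cast_id]
    ring
  obtain ⟨t, ht⟩ := (ZMod.intCast_zmod_eq_zero_iff_dvd _ m).mp h0
  calc a ^ n = a ^ (((n : ZMod m).val : ℤ) + (m : ℤ) * (-t)) := by
        rw [show ((n : ZMod m).val : ℤ) + (m:ℤ) * (-t) = n by rw [mul_neg]; omega]
  _ = a ^ (((n : ZMod m).val : ℤ)) * (a ^ ((m:ℕ):ℤ)) ^ (-t) := by
        rw [zpow_add, zpow_mul]
  _ = a ^ ((n : ZMod m)).val := by
        rw [zpow_natCast, zpow_natCast, ha, one_zpow, mul_one]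

set_option maxHeartbeats 1000000 in
/-- Let `G₂ = ⟨a,b,c | a⁴ = b⁴ = c² = 1, [a,b] = 1, [c,a] = a², [c,b] = b²⟩ ≅ ℤ₂ ⋉ (ℤ₄)²`
(`SmallGroup(32,34)`).  Every normal abelian subgroup of `G₂` of order 4 is contained in
`⟨a,b⟩`, and the only normal subgroup of `G₂` isomorphic to `ℤ₂ × ℤ₂` is the central
subgroup `⟨a², b²⟩`. -/
theorem stmt16 (G : Type*) [Group G] (a b c : G)
    (ha : a ^ 4 = 1) (hb : b ^ 4 = 1) (hc : c ^ 2 = 1)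
    (hab : a * b = b * a)
    (hca : c⁻¹ * a⁻¹ * c * a = a ^ 2) (hcb : c⁻¹ * b⁻¹ * c * b = b ^ 2)
    (hgen : Subgroup.closure {a, b, c} = ⊤) (hcard : Nat.card G = 32) :
    (∀ H : Subgroup G, H.Normal → (∀ x y : H, x * y = y * x) → Nat.card H = 4 →
      H ≤ Subgroup.closure {a, b}) ∧
    (∀ H : Subgroup G, H.Normal →
      Nonempty (H ≃* (Multiplicative (ZMod 2) × Multiplicative (ZMod 2))) →
      H = Subgroup.closure {a ^ 2, b ^ 2}) := by
  have hfinG : Finite G := Nat.finite_of_card_ne_zero (by rw [hcard]; omega)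
  -- basic relations
  have hcc : c * c = 1 := by rw [← sq]; exact hc
  have hc' : c⁻¹ = c := inv_eq_of_mul_eq_one_right hcc
  have hconj : ∀ x : G, (c⁻¹ * x⁻¹ * c * x = x ^ 2) → c * x * c⁻¹ = x⁻¹ := by
    intro x hx
    have h1 : c⁻¹ * x⁻¹ * c = x ^ 2 * x⁻¹ := by rw [← hx]; group
    have h2 : c⁻¹ * x⁻¹ * c = x := by rw [h1]; group
    have h4 : c * (c⁻¹ * x⁻¹ * c) * c⁻¹ = c * x * c⁻¹ := by rw [h2]
    rw [← h4]; group
  have hconja := hconj a hca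
  have hconjb := hconj b hcb
  have hswa : ∀ n : ℤ, c * a ^ n = a ^ (-n) * c := by
    intro n
    have h : c * a ^ n * c⁻¹ = a ^ (-n) := by rw [← conj_zpow, hconja, zpow_neg, inv_zpow]
    calc c * a ^ n = (c * a ^ n * c⁻¹) * c := by group
    _ = a ^ (-n) * c := by rw [h]
  have hswb : ∀ n : ℤ, c * b ^ n = b ^ (-n) * c := by
    intro n
    have h : c * b ^ n * c⁻¹ = b ^ (-n) := by rw [← conj_zpow, hconjb, zpow_neg, inv_zpow]
    calc c * b ^ n = (c * b ^ n * c⁻¹) * c := by group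
    _ = b ^ (-n) * c := by rw [h]
  have hcm : ∀ m n : ℤ, a ^ m * b ^ n = b ^ n * a ^ m := fun m n =>
    (Commute.zpow_zpow hab m n).eq
  have hZW : ∀ i j i' j' : ℤ, (a^i*b^j)*(a^i'*b^j') = a^(i+i')*b^(j+j') := by
    intro i j i' j'
    calc a^i*b^j*(a^i'*b^j') = a^i*((b^j*a^i')*b^j') := by group
    _ = a^i*((a^i'*b^j)*b^j') := by rw [hcm]
    _ = (a^i*a^i')*(b^j*b^j') := by group
    _ = a^(i+i')*b^(j+j') := by rw [zpow_add, zpow_add]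
  have hswab : ∀ m n : ℤ, c * (a^m*b^n) = (a^(-m)*b^(-n))*c := by
    intro m n
    calc c * (a^m*b^n) = (c * a^m) * b^n := by group
    _ = a^(-m) * (c * b^n) := by rw [hswa]; group
    _ = (a^(-m)*b^(-n))*c := by rw [hswb]; group
  have hinv2 : ∀ i j : ℤ, (a^i*b^j*c) * (a^i*b^j*c) = 1 := by
    intro i j
    calc (a^i*b^j*c) * (a^i*b^j*c) = (a^i*b^j) * (c * (a^i*b^j)) * c := by group
    _ = (a^i*b^j) * ((a^(-i)*b^(-j))*c) * c := by rw [hswab]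
    _ = (a^i*b^j) * (a^(-i)*b^(-j)) * (c*c) := by group
    _ = 1 := by rw [hcc, hZW]; norm_num
  -- normal form
  have hform : ∀ x : G, ∃ i j : ℤ, x = a^i*b^j ∨ x = a^i*b^j*c := by
    intro x
    have hx : x ∈ Subgroup.closure {a, b, c} := hgen ▸ Subgroup.mem_top x
    induction hx using Subgroup.closure_induction with
    | mem y hy =>
      rcases hy with rfl | rfl | rfl
      · exact ⟨1, 0, Or.inl (by group)⟩
      · exact ⟨0, 1, Or.inl (by group)⟩
      · exact ⟨0, 0, Or.inr (by group)⟩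
    | one => exact ⟨0, 0, Or.inl (by group)⟩
    | mul x y _ _ hx hy =>
      obtain ⟨i, j, hx⟩ := hx
      obtain ⟨i', j', hy⟩ := hy
      rcases hx with rfl | rfl <;> rcases hy with rfl | rfl
      · exact ⟨i+i', j+j', Or.inl (hZW i j i' j')⟩
      · refine ⟨i+i', j+j', Or.inr ?_⟩
        calc (a^i*b^j)*(a^i'*b^j'*c) = ((a^i*b^j)*(a^i'*b^j'))*c := by group
        _ = a^(i+i')*b^(j+j')*c := by rw [hZW]
      · refine ⟨i-i', j-j', Or.inr ?_⟩
        calc (a^i*b^j*c)*(a^i'*b^j') = (a^i*b^j)*(c*(a^i'*b^j')) := by group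
        _ = (a^i*b^j)*((a^(-i')*b^(-j'))*c) := by rw [hswab]
        _ = (a^(i + -i')*b^(j + -j'))*c := by rw [← mul_assoc, hZW]
        _ = a^(i-i')*b^(j-j')*c := by rw [sub_eq_add_neg, sub_eq_add_neg]
      · refine ⟨i-i', j-j', Or.inl ?_⟩
        calc (a^i*b^j*c)*(a^i'*b^j'*c) = (a^i*b^j)*(c*(a^i'*b^j'))*c := by group
        _ = (a^i*b^j)*((a^(-i')*b^(-j'))*c)*c := by rw [hswab]
        _ = ((a^i*b^j)*(a^(-i')*b^(-j')))*(c*c) := by group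
        _ = (a^(i + -i')*b^(j + -j')) := by rw [hcc, hZW, mul_one]
        _ = a^(i-i')*b^(j-j') := by rw [sub_eq_add_neg, sub_eq_add_neg]
    | inv x _ hx =>
      obtain ⟨i, j, hx⟩ := hx
      rcases hx with rfl | rfl
      · refine ⟨-i, -j, Or.inl ?_⟩
        rw [mul_inv_rev, ← zpow_neg, ← zpow_neg, hcm]
      · exact ⟨i, j, Or.inr (inv_eq_of_mul_eq_one_right (hinv2 i j))⟩

  -- bridges
  have bra : ∀ n : ℤ, a ^ n = a ^ ((n : ZMod 4)).val := pow_bridge a 4 ha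
  have brb : ∀ n : ℤ, b ^ n = b ^ ((n : ZMod 4)).val := pow_bridge b 4 hb
  have brc : ∀ n : ℤ, c ^ n = c ^ ((n : ZMod 2)).val := pow_bridge c 2 hc
  have hgform : ∀ (i j : ℤ) (k : ℕ), a^i*b^j*c^k
      = a ^ ((i : ZMod 4)).val * b ^ ((j : ZMod 4)).val * c ^ ((k : ZMod 2)).val := by
    intro i j k
    rw [bra, brb, ← zpow_natCast c k, brc]
    norm_num
  set g : ZMod 4 × ZMod 4 × ZMod 2 → G :=
    fun p => a ^ p.1.val * b ^ p.2.1.val * c ^ p.2.2.val with hgdef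
  have hgsurj : Function.Surjective g := by
    intro x
    obtain ⟨i, j, hx | hx⟩ := hform x
    · refine ⟨((i : ZMod 4), (j : ZMod 4), ((0:ℕ) : ZMod 2)), ?_⟩
      have h0 : x = a^i*b^j*c^(0:ℕ) := by rw [hx, pow_zero, mul_one]
      rw [h0, hgform i j 0]
    · refine ⟨((i : ZMod 4), (j : ZMod 4), ((1:ℕ) : ZMod 2)), ?_⟩
      have h0 : x = a^i*b^j*c^(1:ℕ) := by rw [hx, pow_one]
      rw [h0, hgform i j 1]
  have hcards : Nat.card (ZMod 4 × ZMod 4 × ZMod 2) = Nat.card G := by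
    simp [Nat.card_prod, Nat.card_zmod, hcard]
  have hginj := ((Nat.bijective_iff_surjective_and_card g).mpr ⟨hgsurj, hcards⟩).injective
  have hiff : ∀ (i j : ℤ) (k : ℕ) (i' j' : ℤ) (k' : ℕ),
      a^i*b^j*c^k = a^i'*b^j'*c^k' →
      (i : ZMod 4) = (i' : ZMod 4) ∧ (j : ZMod 4) = (j' : ZMod 4) ∧
        (k : ZMod 2) = (k' : ZMod 2) := by
    intro i j k i' j' k' h
    have h2 : g (↑i, ↑j, (↑k : ZMod 2)) = g (↑i', ↑j', (↑k' : ZMod 2)) := by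
      simp only [hgdef]
      rw [← hgform, ← hgform]
      exact h
    have h3 := hginj h2
    simpa [Prod.ext_iff] using h3
  have hneC : ∀ (i j i' j' : ℤ), a^i*b^j*c ≠ a^i'*b^j' := by
    intro i j i' j' h
    have h' : a^i*b^j*c^(1:ℕ) = a^i'*b^j'*c^(0:ℕ) := by
      rw [pow_one, pow_zero, mul_one]; exact h
    have h3 := (hiff i j 1 i' j' 0 h').2.2
    simp at h3
  have hneAB : ∀ (i j i' j' : ℤ), a^i*b^j = a^i'*b^j' →
      (i : ZMod 4) = (i' : ZMod 4) ∧ (j : ZMod 4) = (j' : ZMod 4) := by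
    intro i j i' j' h
    have h' : a^i*b^j*c^(0:ℕ) = a^i'*b^j'*c^(0:ℕ) := by
      rw [pow_zero, mul_one, mul_one]; exact h
    exact ⟨(hiff _ _ _ _ _ _ h').1, (hiff _ _ _ _ _ _ h').2.1⟩
  have hzz : ∀ i i' : ℤ, ((i : ZMod 4) = (i' : ZMod 4)) → i % 4 = i' % 4 := by
    intro i i' h
    rwa [ZMod.intCast_eq_intCast_iff] at h
  have hne4 : ∀ i j i' j' : ℤ, i % 4 ≠ i' % 4 → a^i*b^j ≠ a^i'*b^j' := by
    intro i j i' j' hne h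
    exact hne (hzz _ _ (hneAB _ _ _ _ h).1)
  have hne4' : ∀ i j i' j' : ℤ, j % 4 ≠ j' % 4 → a^i*b^j ≠ a^i'*b^j' := by
    intro i j i' j' hne h
    exact hne (hzz _ _ (hneAB _ _ _ _ h).2)
  -- membership in ⟨a,b⟩
  have hAmem : ∀ x : G, x ∈ Subgroup.closure ({a, b} : Set G) ↔ ∃ i j : ℤ, x = a^i*b^j := by
    intro x
    constructor
    · intro hx
      induction hx using Subgroup.closure_induction with
      | mem y hy =>
        rcases hy with rfl | rfl
        · exact ⟨1, 0, by group⟩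
        · exact ⟨0, 1, by group⟩
      | one => exact ⟨0, 0, by group⟩
      | mul x y _ _ hx hy =>
        obtain ⟨i, j, rfl⟩ := hx
        obtain ⟨i', j', rfl⟩ := hy
        exact ⟨i+i', j+j', hZW i j i' j'⟩
      | inv x _ hx =>
        obtain ⟨i, j, rfl⟩ := hx
        exact ⟨-i, -j, by rw [mul_inv_rev, ← zpow_neg, ← zpow_neg, hcm]⟩
    · rintro ⟨i, j, rfl⟩
      exact mul_mem (zpow_mem (Subgroup.subset_closure (by simp)) i)
        (zpow_mem (Subgroup.subset_closure (by simp)) j)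
  -- distinctness of 1, a², b², a²b²
  have d12 : (1:G) ≠ a^(2:ℤ) := by
    intro h
    refine hne4 0 0 2 0 (by norm_num) ?_
    calc a^(0:ℤ)*b^(0:ℤ) = (1:G) := by group
    _ = a^(2:ℤ) := h
    _ = a^(2:ℤ)*b^(0:ℤ) := by group
  have d13 : (1:G) ≠ b^(2:ℤ) := by
    intro h
    refine hne4' 0 0 0 2 (by norm_num) ?_
    calc a^(0:ℤ)*b^(0:ℤ) = (1:G) := by group
    _ = b^(2:ℤ) := h
    _ = a^(0:ℤ)*b^(2:ℤ) := by group
  have d14 : (1:G) ≠ a^(2:ℤ)*b^(2:ℤ) := by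
    intro h
    refine hne4 0 0 2 2 (by norm_num) ?_
    calc a^(0:ℤ)*b^(0:ℤ) = (1:G) := by group
    _ = a^(2:ℤ)*b^(2:ℤ) := h
  have d23 : a^(2:ℤ) ≠ b^(2:ℤ) := by
    intro h
    refine hne4 2 0 0 2 (by norm_num) ?_
    calc a^(2:ℤ)*b^(0:ℤ) = a^(2:ℤ) := by group
    _ = b^(2:ℤ) := h
    _ = a^(0:ℤ)*b^(2:ℤ) := by group
  have d24 : a^(2:ℤ) ≠ a^(2:ℤ)*b^(2:ℤ) := by
    intro h
    refine hne4' 2 0 2 2 (by norm_num) ?_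
    calc a^(2:ℤ)*b^(0:ℤ) = a^(2:ℤ) := by group
    _ = a^(2:ℤ)*b^(2:ℤ) := h
  have d34 : b^(2:ℤ) ≠ a^(2:ℤ)*b^(2:ℤ) := by
    intro h
    refine hne4 0 2 2 2 (by norm_num) ?_
    calc a^(0:ℤ)*b^(2:ℤ) = b^(2:ℤ) := by group
    _ = a^(2:ℤ)*b^(2:ℤ) := h
  -- claim 1
  have claim1 : ∀ H : Subgroup G, H.Normal → Nat.card H = 4 →
      H ≤ Subgroup.closure ({a, b} : Set G) := by
    intro H hHn hH4 x hxH
    obtain ⟨i, j, hx | hx⟩ := hform x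
    · exact (hAmem x).mpr ⟨i, j, hx⟩
    exfalso
    have hconjxa : a⁻¹ * x * a⁻¹⁻¹ ∈ H := hHn.conj_mem x hxH a⁻¹
    have e1 : a⁻¹ * x * a⁻¹⁻¹ = a^(i-2)*b^j*c := by
      rw [hx, inv_inv]
      calc a⁻¹ * (a^i*b^j*c) * a = a^(i-1)*b^j*(c*a^(1:ℤ)) := by group
      _ = a^(i-1)*b^j*(a^(-1:ℤ)*c) := by rw [hswa]
      _ = a^(i-1)*(b^j*a^(-1:ℤ))*c := by group
      _ = a^(i-1)*(a^(-1:ℤ)*b^j)*c := by rw [hcm]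
      _ = a^(i-2)*b^j*c := by group
    have hx2 : x * (a^(i-2)*b^j*c) ∈ H := mul_mem hxH (by rwa [e1] at hconjxa)
    have e2 : x * (a^(i-2)*b^j*c) = a^(2:ℤ) := by
      rw [hx]
      calc (a^i*b^j*c) * (a^(i-2)*b^j*c) = (a^i*b^j)*(c*(a^(i-2)*b^j))*c := by group
      _ = (a^i*b^j)*((a^(-(i-2))*b^(-j))*c)*c := by rw [hswab]
      _ = ((a^i*b^j)*(a^(-(i-2))*b^(-j)))*(c*c) := by group
      _ = (a^(i + -(i-2))*b^(j + -j)) * 1 := by rw [hcc, hZW]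
      _ = a^(2:ℤ) := by
            rw [show i + -(i-2) = 2 by ring, show j + -j = 0 by ring]; group
    have ha2H : a^(2:ℤ) ∈ H := by rwa [e2] at hx2
    have hconjxb : b⁻¹ * x * b⁻¹⁻¹ ∈ H := hHn.conj_mem x hxH b⁻¹
    have e1b : b⁻¹ * x * b⁻¹⁻¹ = a^i*b^(j-2)*c := by
      rw [hx, inv_inv]
      calc b⁻¹ * (a^i*b^j*c) * b = (b^(-1:ℤ)*a^i)*b^j*(c*b^(1:ℤ)) := by group
      _ = (b^(-1:ℤ)*a^i)*b^j*(b^(-1:ℤ)*c) := by rw [hswb]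
      _ = (b^(-1:ℤ)*a^i)*(b^j*b^(-1:ℤ))*c := by group
      _ = (a^i*b^(-1:ℤ))*(b^j*b^(-1:ℤ))*c := by rw [← hcm]
      _ = a^i*b^(j-2)*c := by group
    have hx2b : x * (a^i*b^(j-2)*c) ∈ H := mul_mem hxH (by rwa [e1b] at hconjxb)
    have e2b : x * (a^i*b^(j-2)*c) = b^(2:ℤ) := by
      rw [hx]
      calc (a^i*b^j*c) * (a^i*b^(j-2)*c) = (a^i*b^j)*(c*(a^i*b^(j-2)))*c := by group
      _ = (a^i*b^j)*((a^(-i)*b^(-(j-2)))*c)*c := by rw [hswab]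
      _ = ((a^i*b^j)*(a^(-i)*b^(-(j-2))))*(c*c) := by group
      _ = (a^(i + -i)*b^(j + -(j-2))) * 1 := by rw [hcc, hZW]
      _ = b^(2:ℤ) := by
            rw [show i + -i = 0 by ring, show j + -(j-2) = 2 by ring]; group
    have hb2H : b^(2:ℤ) ∈ H := by rwa [e2b] at hx2b
    -- five distinct elements in H
    have hxform : ∀ i' j' : ℤ, ¬ (x = a^i'*b^j') := fun i' j' h =>
      hneC i j i' j' (hx.symm.trans h)
    have dx1 : x ≠ 1 := fun h => hxform 0 0 (h.trans (by group))
    have dx2 : x ≠ a^(2:ℤ) := fun h => hxform 2 0 (h.trans (by group))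
    have dx3 : x ≠ b^(2:ℤ) := fun h => hxform 0 2 (h.trans (by group))
    have dx4 : x ≠ a^(2:ℤ)*b^(2:ℤ) := fun h => hxform 2 2 h
    have hsub : ({x, 1, a^(2:ℤ), b^(2:ℤ), a^(2:ℤ)*b^(2:ℤ)} : Set G) ⊆ (H : Set G) := by
      intro y hy
      simp only [Set.mem_insert_iff, Set.mem_singleton_iff] at hy
      rcases hy with rfl | rfl | rfl | rfl | rfl
      · exact hxH
      · exact one_mem H
      · exact ha2H
      · exact hb2H
      · exact mul_mem ha2H hb2H
    have h5 : ({x, 1, a^(2:ℤ), b^(2:ℤ), a^(2:ℤ)*b^(2:ℤ)} : Set G).ncard = 5 := by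
      rw [Set.ncard_insert_of_notMem ?_ (Set.toFinite _),
        Set.ncard_insert_of_notMem ?_ (Set.toFinite _),
        Set.ncard_insert_of_notMem ?_ (Set.toFinite _),
        Set.ncard_insert_of_notMem ?_ (Set.toFinite _),
        Set.ncard_singleton]
      · simp only [Set.mem_insert_iff, Set.mem_singleton_iff, not_or]; exact d34
      · simp only [Set.mem_insert_iff, Set.mem_singleton_iff, not_or]; exact ⟨d23, d24⟩
      · simp only [Set.mem_insert_iff, Set.mem_singleton_iff, not_or]; exact ⟨d12, d13, d14⟩
      · simp only [Set.mem_insert_iff, Set.mem_singleton_iff, not_or]; exact ⟨dx1, dx2, dx3, dx4⟩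
    have hle := Set.ncard_le_ncard hsub (Set.toFinite _)
    rw [h5] at hle
    have hHcard : (H : Set G).ncard = 4 := by
      rw [← Nat.card_coe_set_eq]
      exact hH4
    omega
  -- conversions between ℕ-pow and ℤ-pow
  have hA2 : a^(2:ℕ) = a^(2:ℤ) := by rw [← zpow_natCast a 2]; norm_num
  have hB2 : b^(2:ℕ) = b^(2:ℤ) := by rw [← zpow_natCast b 2]; norm_num
  have v2 : (2 : ZMod 4).val = 2 := rfl
  have hQS4 : ∀ x : G, (∃ i j : ℤ, x = a^i*b^j) → x * x = 1 →
      x ∈ ({1, a^(2:ℤ), b^(2:ℤ), a^(2:ℤ)*b^(2:ℤ)} : Set G) := by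
    rintro x ⟨i, j, rfl⟩ hxx
    rw [hZW] at hxx
    have h0 : a^(i+i)*b^(j+j) = a^(0:ℤ)*b^(0:ℤ) := by rw [hxx]; group
    obtain ⟨h1, h2⟩ := hneAB _ _ _ _ h0
    push_cast at h1 h2
    have hu : ∀ u : ZMod 4, u + u = 0 → u = 0 ∨ u = 2 := by decide
    have hi := hu _ h1
    have hj := hu _ h2
    rw [bra i, brb j]
    rcases hi with hi | hi <;> rcases hj with hj | hj <;> rw [hi, hj] <;>
      simp [ZMod.val_zero, v2, Set.mem_insert_iff]
  refine ⟨fun H hN _ h4 => claim1 H hN h4, ?_⟩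
  rintro H hHn ⟨e⟩
  have hM : ∀ m : Multiplicative (ZMod 2) × Multiplicative (ZMod 2), m * m = 1 := by decide
  have hcard4 : Nat.card H = 4 := by
    rw [Nat.card_congr e.toEquiv]
    simp [Nat.card_eq_fintype_card]
  have hsq : ∀ x : H, x * x = 1 := fun x => e.injective (by rw [map_mul, map_one]; exact hM _)
  have hHA := claim1 H hHn hcard4
  have hmemS4 : (H : Set G) ⊆ ({1, a^(2:ℤ), b^(2:ℤ), a^(2:ℤ)*b^(2:ℤ)} : Set G) := by
    intro x hx
    obtain ⟨i, j, hxf⟩ := (hAmem x).mp (hHA hx)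
    refine hQS4 x ⟨i, j, hxf⟩ ?_
    exact congrArg Subtype.val (hsq ⟨x, hx⟩)
  have hKQ : ∀ x ∈ Subgroup.closure ({a^2, b^2} : Set G), (∃ i j : ℤ, x = a^i*b^j) ∧ x*x = 1 := by
    intro x hx
    induction hx using Subgroup.closure_induction with
    | mem y hy =>
      rcases hy with rfl | rfl
      · refine ⟨⟨2, 0, by rw [hA2]; group⟩, ?_⟩
        rw [← pow_add]
        norm_num [ha]
      · refine ⟨⟨0, 2, by rw [hB2]; group⟩, ?_⟩
        rw [← pow_add]
        norm_num [hb]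
    | one => exact ⟨⟨0, 0, by group⟩, mul_one 1⟩
    | mul x y _ _ hx hy =>
      obtain ⟨⟨i, j, rfl⟩, hx2⟩ := hx
      obtain ⟨⟨i', j', rfl⟩, hy2⟩ := hy
      refine ⟨⟨i+i', j+j', hZW i j i' j'⟩, ?_⟩
      have hcomm' : (a^i'*b^j')*(a^i*b^j) = (a^i*b^j)*(a^i'*b^j') := by
        rw [hZW i' j' i j, hZW i j i' j', add_comm i' i, add_comm j' j]
      calc (a^i*b^j*(a^i'*b^j'))*((a^i*b^j)*(a^i'*b^j'))
          = (a^i*b^j)*((a^i'*b^j')*(a^i*b^j))*(a^i'*b^j') := by group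
      _ = (a^i*b^j)*((a^i*b^j)*(a^i'*b^j'))*(a^i'*b^j') := by rw [hcomm']
      _ = ((a^i*b^j)*(a^i*b^j))*((a^i'*b^j')*(a^i'*b^j')) := by group
      _ = 1 := by rw [hx2, hy2, one_mul]
    | inv x _ hx =>
      obtain ⟨⟨i, j, rfl⟩, hx2⟩ := hx
      have hinv : (a^i*b^j)⁻¹ = a^i*b^j := inv_eq_of_mul_eq_one_right hx2
      rw [hinv]
      exact ⟨⟨i, j, rfl⟩, hx2⟩
  have hKS4 : (Subgroup.closure ({a^2, b^2} : Set G) : Set G) ⊆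
      ({1, a^(2:ℤ), b^(2:ℤ), a^(2:ℤ)*b^(2:ℤ)} : Set G) :=
    fun x hx => hQS4 x (hKQ x hx).1 (hKQ x hx).2
  have hHK : (H : Set G) ⊆ (Subgroup.closure ({a^2, b^2} : Set G) : Set G) := by
    intro x hx
    have hx4 := hmemS4 hx
    simp only [Set.mem_insert_iff, Set.mem_singleton_iff] at hx4
    rcases hx4 with rfl | rfl | rfl | rfl
    · exact one_mem _
    · exact Subgroup.subset_closure (by rw [← hA2]; exact Set.mem_insert _ _)
    · exact Subgroup.subset_closure (by rw [← hB2]; right; rfl)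
    · exact mul_mem (Subgroup.subset_closure (by rw [← hA2]; exact Set.mem_insert _ _))
        (Subgroup.subset_closure (by rw [← hB2]; right; rfl))
  have t1 := Set.ncard_insert_le (1:G) ({a^(2:ℤ), b^(2:ℤ), a^(2:ℤ)*b^(2:ℤ)} : Set G)
  have t2 := Set.ncard_insert_le (a^(2:ℤ)) ({b^(2:ℤ), a^(2:ℤ)*b^(2:ℤ)} : Set G)
  have t3 := Set.ncard_insert_le (b^(2:ℤ)) ({a^(2:ℤ)*b^(2:ℤ)} : Set G)
  have t4 : ({a^(2:ℤ)*b^(2:ℤ)} : Set G).ncard = 1 := Set.ncard_singleton _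
  have hKle : (Subgroup.closure ({a^2, b^2} : Set G) : Set G).ncard ≤
      ({1, a^(2:ℤ), b^(2:ℤ), a^(2:ℤ)*b^(2:ℤ)} : Set G).ncard :=
    Set.ncard_le_ncard hKS4 (Set.toFinite _)
  have hHcard : (H : Set G).ncard = 4 := by
    rw [← Nat.card_coe_set_eq]
    exact hcard4
  have hfin := Set.eq_of_subset_of_ncard_le hHK (by omega) (Set.toFinite _)
  exact SetLike.coe_injective hfin
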